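/- arXiv:2003.07522 — 2 statements merged into one kernel-verified Lean document; each statement's English description precedes it below -/
import Mathlib

section
/- Let A, B, C ∈ ℂ^{r×r}, let B and C commute, let s be a non-negative integer, and suppose C + nI is invertible for all integers n ≥ 0 and C − kI is invertible for all integers 1 ≤ k ≤ s; let |x| < 1. Then ₂F₁(A, B; C−sI; x) = ₂F₁(A, B; C; x) + x·A·∑_{k=1}^{s} [₂F₁(A+I, B+I; C+(2−k)I; x)]·B·(C−kI)⁻¹·(C−(k−1)I)⁻¹. -/
set_option maxHeartbeats 1000000
set_option synthInstance.maxHeartbeats 400000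


/-- The shifted factorial (Pochhammer) matrix: `(A)_0 = I`, `(A)_{n+1} = (A)_n (A + nI)`. -/
noncomputable def mPoch {r : ℕ} (A : Matrix (Fin r) (Fin r) ℂ) : ℕ → Matrix (Fin r) (Fin r) ℂ
  | 0 => 1
  | n + 1 => mPoch A n * (A + (n : ℂ) • 1)

/-- The Gauss hypergeometric matrix function `₂F₁(A, B; C; x)`. -/
noncomputable def hypF21 {r : ℕ} (A B C : Matrix (Fin r) (Fin r) ℂ) (x : ℂ) :
    Matrix (Fin r) (Fin r) ℂ :=
  ∑' n : ℕ, ((n.factorial : ℂ)⁻¹ * x ^ n) • (mPoch A n * mPoch B n * (mPoch C n)⁻¹)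

namespace HypAux

open Filter Finset Topology

variable {r : ℕ}

local notation "Mr" => Matrix (Fin r) (Fin r) ℂ

/-- The general term of the hypergeometric series. -/
noncomputable def term (A B C : Mr) (x : ℂ) (n : ℕ) : Mr :=
  ((n.factorial : ℂ)⁻¹ * x ^ n) • (mPoch A n * mPoch B n * (mPoch C n)⁻¹)

lemma hypF21_eq_tsum_term (A B C : Mr) (x : ℂ) : hypF21 A B C x = ∑' n, term A B C x n := rfl

lemma mPoch_succ (A : Mr) (n : ℕ) : mPoch A (n + 1) = mPoch A n * (A + (n : ℂ) • 1) := rfl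

lemma commute_smul_one (X : Mr) (z : ℂ) : Commute X (z • 1) :=
  (Commute.one_right X).smul_right z

lemma commute_add_smul {X C : Mr} (h : Commute X C) (z : ℂ) : Commute X (C + z • 1) :=
  h.add_right (commute_smul_one X z)

lemma commute_mPoch {X A : Mr} (h : Commute X A) (n : ℕ) : Commute X (mPoch A n) := by
  induction n with
  | zero => exact Commute.one_right X
  | succ n ih => exact ih.mul_right (commute_add_smul h _)

lemma isUnit_mPoch {C : Mr} (hC : ∀ n : ℕ, IsUnit (C + (n : ℂ) • 1)) (n : ℕ) :
    IsUnit (mPoch C n) := by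
  induction n with
  | zero => exact isUnit_one
  | succ n ih => exact ih.mul (hC n)

lemma commute_inv {X M : Mr} (h : Commute X M) (hM : IsUnit M) : Commute X M⁻¹ := by
  have hd : IsUnit M.det := (Matrix.isUnit_iff_isUnit_det M).mp hM
  have h1 : M * M⁻¹ = 1 := Matrix.mul_nonsing_inv M hd
  have h2 : M⁻¹ * M = 1 := Matrix.nonsing_inv_mul M hd
  show X * M⁻¹ = M⁻¹ * X
  calc X * M⁻¹ = M⁻¹ * M * (X * M⁻¹) := by rw [h2, one_mul]
    _ = M⁻¹ * (M * X) * M⁻¹ := by simp only [mul_assoc]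
    _ = M⁻¹ * (X * M) * M⁻¹ := by rw [h.eq]
    _ = M⁻¹ * X * (M * M⁻¹) := by simp only [mul_assoc]
    _ = M⁻¹ * X := by rw [h1, mul_one]

lemma mul_mPoch_add_one (A : Mr) (n : ℕ) : A * mPoch (A + 1) n = mPoch A (n + 1) := by
  induction n with
  | zero => simp [mPoch]
  | succ n ih =>
    have h1 : A + 1 + (n : ℂ) • 1 = A + ((n + 1 : ℕ) : ℂ) • 1 := by
      push_cast
      rw [add_smul, one_smul]
      abel
    rw [mPoch_succ, ← mul_assoc, ih, h1, ← mPoch_succ]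

lemma mPoch_sub_one (C : Mr) (n : ℕ) : mPoch (C - 1) (n + 1) = (C - 1) * mPoch C n := by
  induction n with
  | zero => simp [mPoch]
  | succ n ih =>
    have h1 : C - 1 + ((n + 1 : ℕ) : ℂ) • 1 = C + (n : ℂ) • 1 := by
      push_cast
      rw [add_smul, one_smul]
      abel
    rw [mPoch_succ, ih, h1, mul_assoc, ← mPoch_succ]

lemma key_inv {C : Mr} (hC : ∀ n : ℕ, IsUnit (C + (n : ℂ) • 1)) (hC1 : IsUnit (C - 1)) (n : ℕ) :
    (mPoch (C - 1) (n + 1))⁻¹ =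
      (mPoch C (n + 1))⁻¹ + ((n : ℂ) + 1) • ((mPoch C (n + 1))⁻¹ * (C - 1)⁻¹) := by
  set P := mPoch C n with hP
  set D := C + (n : ℂ) • 1 with hD
  set E := C - 1 with hE
  have hEunit : IsUnit E := hC1
  have hDunit : IsUnit D := hC n
  have hEd : IsUnit E.det := (Matrix.isUnit_iff_isUnit_det E).mp hEunit
  have hDd : IsUnit D.det := (Matrix.isUnit_iff_isUnit_det D).mp hDunit
  have hDmul : D * E⁻¹ = 1 + ((n : ℂ) + 1) • E⁻¹ := by
    have hsplit : D = E + ((n : ℂ) + 1) • 1 := by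
      rw [hD, hE, add_smul, one_smul]
      abel
    rw [hsplit, add_mul, Matrix.mul_nonsing_inv E hEd, smul_mul_assoc, one_mul]
  have hEinv : E⁻¹ = D⁻¹ + ((n : ℂ) + 1) • (D⁻¹ * E⁻¹) := by
    have h0 : E⁻¹ = D⁻¹ * (D * E⁻¹) := by
      rw [← mul_assoc, Matrix.nonsing_inv_mul D hDd, one_mul]
    conv_lhs => rw [h0, hDmul]
    rw [mul_add, mul_one, mul_smul_comm]
  have hPD : Commute P D := (commute_mPoch (commute_add_smul (Commute.refl C) _).symm n).symm
  have hPDinv : Commute P⁻¹ D⁻¹ :=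
    commute_inv (commute_inv hPD.symm (isUnit_mPoch hC n)).symm hDunit
  have hL : mPoch (C - 1) (n + 1) = E * P := mPoch_sub_one C n
  have hR : mPoch C (n + 1) = P * D := rfl
  rw [hL, hR, Matrix.mul_inv_rev, Matrix.mul_inv_rev]
  conv_lhs => rw [hEinv]
  rw [mul_add, mul_smul_comm, ← mul_assoc, hPDinv.eq]

/-! ### Norm estimates -/

attribute [local instance] Matrix.linftyOpNormedRing Matrix.linftyOpNormedAlgebra

section Norms

variable (hr : 0 < r)
include hr

lemma norm_one_le' : ‖(1 : Mr)‖ ≤ 1 := by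
  haveI : Nonempty (Fin r) := ⟨⟨0, hr⟩⟩
  exact le_of_eq norm_one

lemma norm_smul_one_le (z : ℂ) : ‖z • (1 : Mr)‖ ≤ ‖z‖ := by
  rw [norm_smul]
  calc ‖z‖ * ‖(1 : Mr)‖ ≤ ‖z‖ * 1 := by
        have := norm_one_le' hr
        gcongr
    _ = ‖z‖ := mul_one _

lemma norm_mPoch_le (A : Mr) (n : ℕ) :
    ‖mPoch A n‖ ≤ ∏ k ∈ range n, (‖A‖ + k) := by
  induction n with
  | zero => simpa [mPoch] using norm_one_le' hr
  | succ n ih =>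
    rw [mPoch_succ, prod_range_succ]
    calc ‖mPoch A n * (A + (n : ℂ) • 1)‖ ≤ ‖mPoch A n‖ * ‖A + (n : ℂ) • 1‖ := norm_mul_le _ _
      _ ≤ (∏ k ∈ range n, (‖A‖ + k)) * (‖A‖ + n) := by
          have h1 : ‖A + (n : ℂ) • 1‖ ≤ ‖A‖ + n := by
            calc ‖A + (n : ℂ) • 1‖ ≤ ‖A‖ + ‖(n : ℂ) • (1 : Mr)‖ := norm_add_le _ _
              _ ≤ ‖A‖ + n := by
                  have := norm_smul_one_le hr (n : ℂ)
                  simp only [Complex.norm_natCast] at this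
                  linarith
          have hprodnn : (0:ℝ) ≤ ∏ k ∈ range n, (‖A‖ + k) := by positivity
          exact mul_le_mul ih h1 (norm_nonneg _) hprodnn

lemma norm_one_sub_inv_le {T : Mr} (hT : ‖T‖ < 1) : ‖(1 - T)⁻¹‖ ≤ (1 - ‖T‖)⁻¹ := by
  have h1 : (1 - T)⁻¹ = Ring.inverse (1 - T) := Matrix.nonsing_inv_eq_ringInverse _
  have h2 : Ring.inverse (1 - T) = ∑' n : ℕ, T ^ n := (geom_series_eq_inverse T hT).symm
  rw [h1, h2]
  have hgeo : HasSum (fun n : ℕ => ‖T‖ ^ n) (1 - ‖T‖)⁻¹ :=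
    hasSum_geometric_of_lt_one (norm_nonneg T) hT
  refine tsum_of_norm_bounded hgeo fun i => ?_
  cases i with
  | zero => simpa using norm_one_le' hr
  | succ i => exact norm_pow_le' T i.succ_pos

lemma norm_shift_inv_le {C : Mr} {n : ℕ} (hn : ‖C‖ < n) :
    ‖(C + (n : ℂ) • 1)⁻¹‖ ≤ ((n : ℝ) - ‖C‖)⁻¹ := by
  have hn0 : (0:ℝ) < (n : ℝ) := lt_of_le_of_lt (norm_nonneg C) hn
  have hnz : ((n : ℂ)) ≠ 0 := by
    have : (n : ℕ) ≠ 0 := by exact_mod_cast hn0.ne'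
    exact_mod_cast Nat.cast_ne_zero.mpr this
  set T : Mr := -((n : ℂ)⁻¹ • C) with hT
  have hTnorm : ‖T‖ = ‖C‖ / n := by
    rw [hT, norm_neg, norm_smul, norm_inv]
    simp [Complex.norm_natCast, div_eq_inv_mul]
  have hTlt : ‖T‖ < 1 := by
    rw [hTnorm, div_lt_one hn0]
    exact hn
  have hkey : C + (n : ℂ) • 1 = (n : ℂ) • ((1 : Mr) - T) := by
    rw [hT, smul_sub, smul_neg, sub_neg_eq_add, smul_smul, mul_inv_cancel₀ hnz, one_smul]
    abel
  have hunit : IsUnit ((1 : Mr) - T) := isUnit_one_sub_of_norm_lt_one hTlt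
  have hdet : IsUnit ((1 : Mr) - T).det := (Matrix.isUnit_iff_isUnit_det _).mp hunit
  have hinv : (C + (n : ℂ) • 1)⁻¹ = (n : ℂ)⁻¹ • ((1 : Mr) - T)⁻¹ := by
    apply Matrix.inv_eq_right_inv
    rw [hkey, smul_mul_smul_comm, mul_inv_cancel₀ hnz, one_smul,
      Matrix.mul_nonsing_inv _ hdet]
  rw [hinv, norm_smul, norm_inv]
  have hcn : ‖(n : ℂ)‖ = (n : ℝ) := by simp
  rw [hcn]
  calc (n : ℝ)⁻¹ * ‖((1 : Mr) - T)⁻¹‖ ≤ (n : ℝ)⁻¹ * (1 - ‖T‖)⁻¹ := by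
        have := norm_one_sub_inv_le hr hTlt
        gcongr
    _ = ((n : ℝ) - ‖C‖)⁻¹ := by
        rw [hTnorm, ← mul_inv]
        congr 1
        field_simp

end Norms

/-! ### Summability -/

/-- The real majorant. -/
noncomputable def maj (A B C : Mr) (x : ℂ) (n : ℕ) : ℝ :=
  ((n : ℝ) + 1) * (‖x‖ ^ n / n.factorial * (∏ k ∈ range n, (‖A‖ + k)) *
    (∏ k ∈ range n, (‖B‖ + k)) * (∏ k ∈ range n, ‖(C + (k : ℂ) • 1)⁻¹‖))

lemma maj_nonneg (A B C : Mr) (x : ℂ) (n : ℕ) : 0 ≤ maj A B C x n := by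
  unfold maj; positivity

lemma tendsto_shift_div (α β : ℝ) :
    Tendsto (fun n : ℕ => ((n : ℝ) + α) / ((n : ℝ) + β)) atTop (𝓝 1) := by
  have hb : Tendsto (fun n : ℕ => (n : ℝ) + β) atTop atTop :=
    tendsto_atTop_add_const_right _ β tendsto_natCast_atTop_atTop
  have h0 : Tendsto (fun n : ℕ => (α - β) / ((n : ℝ) + β)) atTop (𝓝 0) :=
    hb.const_div_atTop (α - β)
  have h1 : Tendsto (fun n : ℕ => 1 + (α - β) / ((n : ℝ) + β)) atTop (𝓝 1) := by
    simpa using h0.const_add 1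
  refine Tendsto.congr' ?_ h1
  filter_upwards [hb.eventually_gt_atTop 0] with n hn
  field_simp
  ring

lemma summable_maj (hr : 0 < r) (A B C : Mr) (x : ℂ)
    (hx : ‖x‖ < 1) : Summable (maj A B C x) := by
  set q := ‖x‖ with hq
  have hq0 : (0:ℝ) ≤ q := norm_nonneg x
  set r' : ℝ := (1 + q) / 2 with hr'
  have hqr' : q < r' := by rw [hr']; linarith
  have hr'1 : r' < 1 := by rw [hr']; linarith
  set P : ℕ → ℝ := fun n =>
    q * (((n : ℝ) + 2) / ((n : ℝ) + 1)) * ((‖A‖ + n) / ((n : ℝ) + 1)) *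
      ((‖B‖ + n) / ((n : ℝ) + (-‖C‖))) with hPdef
  have hPtend : Tendsto P atTop (𝓝 q) := by
    have t1 := tendsto_shift_div 2 1
    have t2 := tendsto_shift_div ‖A‖ 1
    have t3 := tendsto_shift_div ‖B‖ (-‖C‖)
    have t2' : Tendsto (fun n : ℕ => (‖A‖ + (n : ℝ)) / ((n : ℝ) + 1)) atTop (𝓝 1) :=
      t2.congr fun n => by ring_nf
    have t3' : Tendsto (fun n : ℕ => (‖B‖ + (n : ℝ)) / ((n : ℝ) + (-‖C‖))) atTop (𝓝 1) :=
      t3.congr fun n => by ring_nf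
    have := (((tendsto_const_nhds (x := q)).mul t1).mul t2').mul t3'
    simpa using this
  have hev : ∀ᶠ n : ℕ in atTop, P n ≤ r' := (hPtend.eventually_lt_const hqr').mono fun n h => h.le
  apply summable_of_ratio_norm_eventually_le hr'1
  filter_upwards [hev, eventually_gt_atTop (Nat.ceil ‖C‖)] with n hPn hnC
  have hnC' : ‖C‖ < (n : ℝ) := lt_of_le_of_lt (Nat.le_ceil _) (by exact_mod_cast hnC)
  have hn1 : (0:ℝ) < (n : ℝ) + 1 := by positivity
  have hnc0 : (0:ℝ) < (n : ℝ) - ‖C‖ := by linarith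
  have hw : ‖(C + (n : ℂ) • 1)⁻¹‖ ≤ ((n : ℝ) - ‖C‖)⁻¹ := norm_shift_inv_le hr hnC'
  have hmaj_succ : maj A B C x (n + 1) =
      maj A B C x n * ((((n : ℝ) + 2) / ((n : ℝ) + 1)) * q * (‖A‖ + n) * (‖B‖ + n) *
        ‖(C + (n : ℂ) • 1)⁻¹‖ / ((n : ℝ) + 1)) := by
    unfold maj
    rw [prod_range_succ, prod_range_succ, prod_range_succ, Nat.factorial_succ, pow_succ]
    have hfac : ((n.factorial : ℝ)) ≠ 0 := by
      exact_mod_cast n.factorial_ne_zero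
    push_cast
    field_simp
    ring
  have hρP : (((n : ℝ) + 2) / ((n : ℝ) + 1)) * q * (‖A‖ + n) * (‖B‖ + n) *
        ‖(C + (n : ℂ) • 1)⁻¹‖ / ((n : ℝ) + 1) ≤ P n := by
    have hP' : P n = (((n : ℝ) + 2) / ((n : ℝ) + 1)) * q * (‖A‖ + n) * (‖B‖ + n) *
        ((n : ℝ) - ‖C‖)⁻¹ / ((n : ℝ) + 1) := by
      simp only [hPdef]
      rw [sub_eq_add_neg ((n:ℝ)) ‖C‖]
      field_simp
    rw [hP']
    gcongr
  have h1 : maj A B C x (n + 1) ≤ r' * maj A B C x n := by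
    rw [hmaj_succ]
    calc maj A B C x n * _ ≤ maj A B C x n * P n := by
          have := maj_nonneg A B C x n
          gcongr
      _ ≤ maj A B C x n * r' := by
          have := maj_nonneg A B C x n
          gcongr
      _ = r' * maj A B C x n := mul_comm _ _
  calc ‖maj A B C x (n + 1)‖ = maj A B C x (n + 1) := Real.norm_of_nonneg (maj_nonneg A B C x _)
    _ ≤ r' * maj A B C x n := h1
    _ = r' * ‖maj A B C x n‖ := by rw [Real.norm_of_nonneg (maj_nonneg A B C x _)]

lemma norm_inv_mPoch_le (hr : 0 < r) (C : Mr) (n : ℕ) :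
    ‖(mPoch C n)⁻¹‖ ≤ ∏ k ∈ range n, ‖(C + (k : ℂ) • 1)⁻¹‖ := by
  induction n with
  | zero => simpa [mPoch, inv_one] using norm_one_le' hr
  | succ n ih =>
    rw [mPoch_succ, Matrix.mul_inv_rev, prod_range_succ]
    calc ‖(C + (n : ℂ) • 1)⁻¹ * (mPoch C n)⁻¹‖
        ≤ ‖(C + (n : ℂ) • 1)⁻¹‖ * ‖(mPoch C n)⁻¹‖ := norm_mul_le _ _
      _ ≤ ‖(C + (n : ℂ) • 1)⁻¹‖ * (∏ k ∈ range n, ‖(C + (k : ℂ) • 1)⁻¹‖) := by gcongr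
      _ = (∏ k ∈ range n, ‖(C + (k : ℂ) • 1)⁻¹‖) * ‖(C + (n : ℂ) • 1)⁻¹‖ := mul_comm _ _

lemma norm_term_le (hr : 0 < r) (A B C : Mr) (x : ℂ) (n : ℕ) :
    ‖term A B C x n‖ ≤ ‖x‖ ^ n / n.factorial * (∏ k ∈ range n, (‖A‖ + k)) *
      (∏ k ∈ range n, (‖B‖ + k)) * (∏ k ∈ range n, ‖(C + (k : ℂ) • 1)⁻¹‖) := by
  unfold term
  rw [norm_smul]
  have hs : ‖(n.factorial : ℂ)⁻¹ * x ^ n‖ = ‖x‖ ^ n / n.factorial := by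
    rw [norm_mul, norm_inv, norm_pow]
    simp [Complex.norm_natCast, div_eq_inv_mul, mul_comm]
  rw [hs]
  have h1 : ‖mPoch A n * mPoch B n * (mPoch C n)⁻¹‖ ≤
      (∏ k ∈ range n, (‖A‖ + k)) * (∏ k ∈ range n, (‖B‖ + k)) *
        (∏ k ∈ range n, ‖(C + (k : ℂ) • 1)⁻¹‖) := by
    calc ‖mPoch A n * mPoch B n * (mPoch C n)⁻¹‖
        ≤ ‖mPoch A n * mPoch B n‖ * ‖(mPoch C n)⁻¹‖ := norm_mul_le _ _
      _ ≤ ‖mPoch A n‖ * ‖mPoch B n‖ * ‖(mPoch C n)⁻¹‖ := by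
          gcongr
          exact norm_mul_le _ _
      _ ≤ (∏ k ∈ range n, (‖A‖ + k)) * (∏ k ∈ range n, (‖B‖ + k)) *
            (∏ k ∈ range n, ‖(C + (k : ℂ) • 1)⁻¹‖) := by
          have nA := norm_mPoch_le hr A n
          have nB := norm_mPoch_le hr B n
          have nC := norm_inv_mPoch_le hr C n
          have pA : (0:ℝ) ≤ ∏ k ∈ range n, (‖A‖ + k) := by positivity
          exact mul_le_mul (mul_le_mul nA nB (norm_nonneg _) pA) nC (norm_nonneg _)
            (by positivity)
  calc ‖x‖ ^ n / n.factorial * ‖mPoch A n * mPoch B n * (mPoch C n)⁻¹‖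
      ≤ ‖x‖ ^ n / n.factorial * ((∏ k ∈ range n, (‖A‖ + k)) *
          (∏ k ∈ range n, (‖B‖ + k)) * (∏ k ∈ range n, ‖(C + (k : ℂ) • 1)⁻¹‖)) := by
        have h2 : (0:ℝ) ≤ ‖x‖ ^ n / n.factorial := by positivity
        exact mul_le_mul_of_nonneg_left h1 h2
    _ = _ := by ring

lemma norm_term_le_maj (hr : 0 < r) (A B C : Mr) (x : ℂ) (n : ℕ) :
    ‖term A B C x n‖ ≤ maj A B C x n := by
  refine le_trans (norm_term_le hr A B C x n) ?_
  unfold maj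
  have h : (0:ℝ) ≤ ‖x‖ ^ n / n.factorial * (∏ k ∈ range n, (‖A‖ + k)) *
      (∏ k ∈ range n, (‖B‖ + k)) * (∏ k ∈ range n, ‖(C + (k : ℂ) • 1)⁻¹‖) := by positivity
  nlinarith [h]

lemma summable_term (hr : 0 < r) (A B C : Mr) (x : ℂ)
    (hx : ‖x‖ < 1) : Summable (term A B C x) :=
  Summable.of_norm_bounded (summable_maj hr A B C x hx) (norm_term_le_maj hr A B C x)

lemma summable_nsmul_term_mul (hr : 0 < r) (A B C K : Mr) (x : ℂ)
    (hx : ‖x‖ < 1) :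
    Summable (fun n : ℕ => (n : ℂ) • (term A B C x n * K)) := by
  have hmaj := summable_maj hr A B C x hx
  refine Summable.of_norm_bounded (g := fun n => maj A B C x n * ‖K‖) (hmaj.mul_right ‖K‖) ?_
  intro n
  rw [norm_smul]
  have h1 : ‖term A B C x n * K‖ ≤ ‖term A B C x n‖ * ‖K‖ := norm_mul_le _ _
  have h2 : ‖(n : ℂ)‖ = (n : ℝ) := by simp
  rw [h2]
  have h3 := norm_term_le hr A B C x n
  have h4 : (n : ℝ) * ‖term A B C x n‖ ≤ maj A B C x n := by
    unfold maj
    nlinarith [norm_nonneg (term A B C x n), h3,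
      mul_le_mul_of_nonneg_left h3 (Nat.cast_nonneg (α := ℝ) n)]
  calc (n:ℝ) * ‖term A B C x n * K‖ ≤ (n:ℝ) * (‖term A B C x n‖ * ‖K‖) :=
        mul_le_mul_of_nonneg_left h1 (Nat.cast_nonneg n)
    _ = ((n:ℝ) * ‖term A B C x n‖) * ‖K‖ := by ring
    _ ≤ maj A B C x n * ‖K‖ := by
        have := norm_nonneg K
        gcongr

/-! ### The single-step contiguous relation -/

lemma step (hr : 0 < r) (A B C : Mr) (x : ℂ) (hBC : B * C = C * B)
    (hC : ∀ n : ℕ, IsUnit (C + (n : ℂ) • 1)) (hC1 : IsUnit (C - 1))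
    (hx : ‖x‖ < 1) :
    hypF21 A B (C - 1) x = hypF21 A B C x +
      x • (A * (hypF21 (A + 1) (B + 1) (C + 1) x * B * (C - 1)⁻¹ * C⁻¹)) := by
  have hC' : ∀ n : ℕ, IsUnit (C + 1 + (n : ℂ) • 1) := by
    intro n
    have h : C + 1 + (n : ℂ) • 1 = C + ((n + 1 : ℕ) : ℂ) • 1 := by
      push_cast
      rw [add_smul, one_smul]
      abel
    rw [h]
    exact hC (n + 1)
  have hCunit : IsUnit C := by
    have := hC 0
    simpa using this
  have hsf : Summable (term A B C x) := summable_term hr A B C x hx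
  have hsg : Summable (fun n : ℕ => (n : ℂ) • (term A B C x n * (C - 1)⁻¹)) :=
    summable_nsmul_term_mul hr A B C (C - 1)⁻¹ x hx
  have hsh : Summable (term (A + 1) (B + 1) (C + 1) x) :=
    summable_term hr (A + 1) (B + 1) (C + 1) x hx
  -- Claim 1 : splitting the `C - 1` term
  have claim1 : ∀ n : ℕ, term A B (C - 1) x n =
      term A B C x n + (n : ℂ) • (term A B C x n * (C - 1)⁻¹) := by
    intro n
    cases n with
    | zero => simp [term, mPoch]
    | succ n =>
      unfold term
      rw [key_inv hC hC1 n, mul_add, smul_add]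
      congr 1
      rw [mul_smul_comm, smul_smul, smul_mul_assoc, smul_smul, ← mul_assoc]
      congr 1
      push_cast
      ring
  -- Claim 2 : identification of the shifted series
  have claim2 : ∀ n : ℕ, ((n + 1 : ℕ) : ℂ) • (term A B C x (n + 1) * (C - 1)⁻¹) =
      x • (A * (term (A + 1) (B + 1) (C + 1) x n * B * (C - 1)⁻¹ * C⁻¹)) := by
    intro n
    have hBC0 : Commute B C := hBC
    have hBB' : Commute B (mPoch (B + 1) n) :=
      commute_mPoch ((Commute.refl B).add_right (Commute.one_right B)) n
    have hBPC' : Commute B ((mPoch (C + 1) n)⁻¹) :=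
      commute_inv (commute_mPoch (hBC0.add_right (Commute.one_right B)) n) (isUnit_mPoch hC' n)
    have hK1K2 : (C - 1)⁻¹ * C⁻¹ = C⁻¹ * (C - 1)⁻¹ := by
      have h0 : Commute C (C - 1) := (Commute.refl C).sub_right (Commute.one_right C)
      exact (commute_inv (commute_inv h0 hC1).symm hCunit).eq
    unfold term
    simp only [smul_mul_assoc, mul_smul_comm, smul_smul]
    congr 1
    · rw [Nat.factorial_succ]
      have h1 : ((n.factorial : ℂ)) ≠ 0 := Nat.cast_ne_zero.mpr n.factorial_ne_zero
      have h2 : ((n : ℂ) + 1) ≠ 0 := Nat.cast_add_one_ne_zero n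
      push_cast
      field_simp
      ring
    · have ePA : mPoch A (n + 1) = A * mPoch (A + 1) n := (mul_mPoch_add_one A n).symm
      have ePB : mPoch B (n + 1) = B * mPoch (B + 1) n := (mul_mPoch_add_one B n).symm
      have ePC : (mPoch C (n + 1))⁻¹ = (mPoch (C + 1) n)⁻¹ * C⁻¹ := by
        rw [← mul_mPoch_add_one C n, Matrix.mul_inv_rev]
      rw [ePA, ePB, ePC]
      calc A * mPoch (A + 1) n * (B * mPoch (B + 1) n) * ((mPoch (C + 1) n)⁻¹ * C⁻¹) * (C - 1)⁻¹
          = A * (mPoch (A + 1) n * (B * (mPoch (B + 1) n *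
              ((mPoch (C + 1) n)⁻¹ * (C⁻¹ * (C - 1)⁻¹))))) := by
            simp only [mul_assoc]
        _ = A * (mPoch (A + 1) n * (B * (mPoch (B + 1) n *
              ((mPoch (C + 1) n)⁻¹ * ((C - 1)⁻¹ * C⁻¹))))) := by
            rw [hK1K2]
        _ = A * (mPoch (A + 1) n * (mPoch (B + 1) n * (B *
              ((mPoch (C + 1) n)⁻¹ * ((C - 1)⁻¹ * C⁻¹))))) := by
            rw [← mul_assoc B (mPoch (B + 1) n), hBB'.eq, mul_assoc]
        _ = A * (mPoch (A + 1) n * (mPoch (B + 1) n * ((mPoch (C + 1) n)⁻¹ * (B *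
              ((C - 1)⁻¹ * C⁻¹))))) := by
            rw [← mul_assoc B ((mPoch (C + 1) n)⁻¹), hBPC'.eq, mul_assoc]
        _ = A * (mPoch (A + 1) n * mPoch (B + 1) n * (mPoch (C + 1) n)⁻¹ * B *
              (C - 1)⁻¹ * C⁻¹) := by
            simp only [mul_assoc]
  -- Assemble
  have hH : HasSum (fun n : ℕ => x • (A * (term (A + 1) (B + 1) (C + 1) x n * B *
        (C - 1)⁻¹ * C⁻¹)))
      (x • (A * ((∑' n, term (A + 1) (B + 1) (C + 1) x n) * B * (C - 1)⁻¹ * C⁻¹))) := by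
    have h0 := hsh.hasSum
    have h1 := h0.mul_right B
    have h2 := h1.mul_right (C - 1)⁻¹
    have h3 := h2.mul_right C⁻¹
    have h4 := h3.mul_left A
    exact h4.const_smul x
  calc hypF21 A B (C - 1) x
      = ∑' n, (term A B C x n + (n : ℂ) • (term A B C x n * (C - 1)⁻¹)) := by
        rw [hypF21_eq_tsum_term]
        exact tsum_congr claim1
    _ = (∑' n, term A B C x n) + ∑' n : ℕ, (n : ℂ) • (term A B C x n * (C - 1)⁻¹) :=
        Summable.tsum_add hsf hsg
    _ = hypF21 A B C x +
          x • (A * (hypF21 (A + 1) (B + 1) (C + 1) x * B * (C - 1)⁻¹ * C⁻¹)) := by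
        rw [hypF21_eq_tsum_term A B C x]
        congr 1
        rw [Summable.tsum_eq_zero_add hsg]
        simp only [Nat.cast_zero, zero_smul, zero_add]
        rw [tsum_congr claim2, hH.tsum_eq, hypF21_eq_tsum_term]

/-! ### Induction on the shift -/

lemma main_aux (hr : 0 < r) (A B C : Mr) (x : ℂ) (hBC : B * C = C * B)
    (hC : ∀ n : ℕ, IsUnit (C + (n : ℂ) • 1)) (hx : ‖x‖ < 1) :
    ∀ s : ℕ, (∀ k : ℕ, 1 ≤ k → k ≤ s → IsUnit (C - (k : ℂ) • 1)) →
      hypF21 A B (C - (s : ℂ) • 1) x = hypF21 A B C x +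
        x • (A * ∑ k ∈ Finset.Icc 1 s,
          hypF21 (A + 1) (B + 1) (C + ((2 : ℂ) - (k : ℂ)) • 1) x * B *
            (C - (k : ℂ) • 1)⁻¹ * (C - ((k : ℂ) - 1) • 1)⁻¹) := by
  intro s
  induction s with
  | zero =>
    intro _
    have he : Finset.Icc 1 0 = (∅ : Finset ℕ) := by
      apply Finset.Icc_eq_empty
      omega
    simp [he]
  | succ s ih =>
    intro hCs
    have hBCs : B * (C - (s : ℂ) • 1) = (C - (s : ℂ) • 1) * B := by
      rw [mul_sub, sub_mul, hBC, mul_smul_comm, smul_mul_assoc, mul_one, one_mul]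
    have hCs' : ∀ n : ℕ, IsUnit (C - (s : ℂ) • 1 + (n : ℂ) • 1) := by
      intro n
      rcases le_or_gt s n with hle | hlt
      · have he : C - (s : ℂ) • 1 + (n : ℂ) • 1 = C + ((n - s : ℕ) : ℂ) • 1 := by
          rw [Nat.cast_sub hle, sub_smul]
          abel
        rw [he]
        exact hC _
      · have he : C - (s : ℂ) • 1 + (n : ℂ) • 1 = C - ((s - n : ℕ) : ℂ) • 1 := by
          rw [Nat.cast_sub hlt.le, sub_smul]
          abel
        rw [he]
        exact hCs _ (by omega) (by omega)
    have hCs1 : IsUnit (C - (s : ℂ) • 1 - 1) := by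
      have he : C - (s : ℂ) • 1 - 1 = C - ((s + 1 : ℕ) : ℂ) • 1 := by
        push_cast
        rw [add_smul, one_smul]
        abel
      rw [he]
      exact hCs (s + 1) (by omega) le_rfl
    have hst := step hr A B (C - (s : ℂ) • 1) x hBCs hCs' hCs1 hx
    have ihs := ih fun k h1 h2 => hCs k h1 (h2.trans (Nat.le_succ s))
    have e1 : C - ((s + 1 : ℕ) : ℂ) • 1 = C - (s : ℂ) • 1 - 1 := by
      push_cast
      rw [add_smul, one_smul]
      abel
    have e2 : C + ((2 : ℂ) - ((s + 1 : ℕ) : ℂ)) • 1 = C - (s : ℂ) • 1 + 1 := by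
      have h2 : ((2 : ℂ) - ((s + 1 : ℕ) : ℂ)) = 1 - (s : ℂ) := by push_cast; ring
      rw [h2, sub_smul, one_smul]
      abel
    have e4 : C - (((s + 1 : ℕ) : ℂ) - 1) • 1 = C - (s : ℂ) • 1 := by
      have h4 : (((s + 1 : ℕ) : ℂ) - 1) = (s : ℂ) := by push_cast; ring
      rw [h4]
    rw [e1, hst, ihs, Finset.sum_Icc_succ_top (by omega : 1 ≤ s + 1)]
    rw [e2, e1, e4, mul_add, smul_add, add_assoc]

end HypAux


theorem hypF21_recursion_C {r : ℕ} (A B C : Matrix (Fin r) (Fin r) ℂ) (x : ℂ) (s : ℕ)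
    (hBC : B * C = C * B)
    (hC : ∀ n : ℕ, IsUnit (C + (n : ℂ) • (1 : Matrix (Fin r) (Fin r) ℂ)))
    (hCs : ∀ k : ℕ, 1 ≤ k → k ≤ s → IsUnit (C - (k : ℂ) • (1 : Matrix (Fin r) (Fin r) ℂ)))
    (hx : ‖x‖ < 1) :
    hypF21 A B (C - (s : ℂ) • 1) x =
      hypF21 A B C x +
        x • (A * ∑ k ∈ Finset.Icc 1 s,
          hypF21 (A + 1) (B + 1) (C + ((2 : ℂ) - (k : ℂ)) • 1) x * B *
            (C - (k : ℂ) • 1)⁻¹ * (C - ((k : ℂ) - 1) • 1)⁻¹) := by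
  rcases Nat.eq_zero_or_pos r with hr | hr
  · subst hr
    haveI : Subsingleton (Matrix (Fin 0) (Fin 0) ℂ) :=
      ⟨fun M N => by ext i j; exact i.elim0⟩
    exact Subsingleton.elim _ _
  · exact HypAux.main_aux hr A B C x hBC hC hx s hCs
end

section
/- Let A, B, B', C ∈ ℂ^{r×r} with C + nI invertible for all integers n ≥ 0 and |x| < 1, |y| < 1, and let s be a non-negative integer. (i) If B + kI is invertible for all integers k ≥ 0, then F₁(A, B+sI, B'; C; x, y) = F₁(A, B, B'; C; x, y) + x·A·[∑_{k=1}^{s} F₁(A+I, B+kI, B'; C+I; x, y)]·C⁻¹. (ii) If B' + kI is invertible for all integers k ≥ 0, then F₁(A, B, B'+sI; C; x, y) = F₁(A, B, B'; C; x, y) + y·A·[∑_{k=1}^{s} F₁(A+I, B, B'+kI; C+I; x, y)]·C⁻¹. (iii) If B − kI is invertible for all integers 1 ≤ k ≤ s, then F₁(A, B−sI, B'; C; x, y) = F₁(A, B, B'; C; x, y) − x·A·[∑_{k=0}^{s−1} F₁(A+I, B−kI, B'; C+I; x, y)]·C⁻¹. (iv) If B' − kI is invertible for all integers 1 ≤ k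 ≤ s, then F₁(A, B, B'−sI; C; x, y) = F₁(A, B, B'; C; x, y) − y·A·[∑_{k=0}^{s−1} F₁(A+I, B, B'−kI; C+I; x, y)]·C⁻¹. -/
/-- The first Appell matrix function `F₁(A, B, B'; C; x, y)`. -/
noncomputable def appellF1 {r : ℕ} (A B B' C : Matrix (Fin r) (Fin r) ℂ) (x y : ℂ) :
    Matrix (Fin r) (Fin r) ℂ :=
  ∑' p : ℕ × ℕ,
    (((p.1.factorial : ℂ) * (p.2.factorial : ℂ))⁻¹ * x ^ p.1 * y ^ p.2) •
      (mPoch A (p.1 + p.2) * mPoch B p.1 * mPoch B' p.2 * (mPoch C (p.1 + p.2))⁻¹)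

section AppellAux

attribute [local instance] Matrix.linftyOpNormedRing Matrix.linftyOpNormedAlgebra

set_option maxHeartbeats 1000000
set_option synthInstance.maxHeartbeats 400000

open Finset Filter

variable {r : ℕ}

private lemma mPoch_succ (A : Matrix (Fin r) (Fin r) ℂ) (n : ℕ) :
    mPoch A (n + 1) = mPoch A n * (A + (n : ℂ) • 1) := rfl

private lemma commute_mPoch {X Y : Matrix (Fin r) (Fin r) ℂ} (h : Commute X Y) (n : ℕ) :
    Commute X (mPoch Y n) := by
  induction n with
  | zero => exact Commute.one_right X
  | succ n ih => exact ih.mul_right (h.add_right ((Commute.one_right X).smul_right _))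

private lemma mPoch_succ_left (A : Matrix (Fin r) (Fin r) ℂ) (n : ℕ) :
    mPoch A (n + 1) = A * mPoch (A + 1) n := by
  induction n with
  | zero => simp [mPoch]
  | succ n ih =>
      have h1 : A + ((n + 1 : ℕ) : ℂ) • 1 = (A + 1) + (n : ℂ) • (1 : Matrix (Fin r) (Fin r) ℂ) := by
        push_cast
        rw [add_smul, one_smul]
        abel
      calc mPoch A (n + 2) = A * mPoch (A + 1) n * (A + ((n + 1 : ℕ) : ℂ) • 1) := by
            rw [mPoch_succ, ih]
        _ = A * (mPoch (A + 1) n * ((A + 1) + (n : ℂ) • 1)) := by rw [h1, mul_assoc]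
        _ = A * mPoch (A + 1) (n + 1) := rfl

private lemma mPoch_shift (B : Matrix (Fin r) (Fin r) ℂ) (m : ℕ) :
    mPoch (B + 1) (m + 1) = mPoch B (m + 1) + ((m : ℂ) + 1) • mPoch (B + 1) m := by
  have hcomm : Commute B (mPoch (B + 1) m) :=
    commute_mPoch ((Commute.refl B).add_right (Commute.one_right B)) m
  have h1 : (B + 1) + (m : ℂ) • (1 : Matrix (Fin r) (Fin r) ℂ) = B + ((m : ℂ) + 1) • 1 := by
    rw [add_smul, one_smul]; abel
  rw [mPoch_succ, h1, mPoch_succ_left, mul_add, ← hcomm.eq, mul_smul_comm, mul_one]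

private lemma isUnit_mPoch {C : Matrix (Fin r) (Fin r) ℂ}
    (hC : ∀ n : ℕ, IsUnit (C + (n : ℂ) • (1 : Matrix (Fin r) (Fin r) ℂ))) (k : ℕ) :
    IsUnit (mPoch C k) := by
  induction k with
  | zero => exact isUnit_one
  | succ k ih => exact ih.mul (hC k)

private lemma hC_succ {C : Matrix (Fin r) (Fin r) ℂ}
    (hC : ∀ n : ℕ, IsUnit (C + (n : ℂ) • (1 : Matrix (Fin r) (Fin r) ℂ))) :
    ∀ n : ℕ, IsUnit ((C + 1) + (n : ℂ) • (1 : Matrix (Fin r) (Fin r) ℂ)) := by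
  intro n
  have h : (C + 1) + (n : ℂ) • (1 : Matrix (Fin r) (Fin r) ℂ) = C + ((n + 1 : ℕ) : ℂ) • 1 := by
    push_cast; rw [add_smul, one_smul]; abel
  rw [h]; exact hC (n + 1)

/-- The general term of the Appell series. -/
private noncomputable def F1t (A B B' C : Matrix (Fin r) (Fin r) ℂ) (x y : ℂ) (p : ℕ × ℕ) :
    Matrix (Fin r) (Fin r) ℂ :=
  (((p.1.factorial : ℂ) * (p.2.factorial : ℂ))⁻¹ * x ^ p.1 * y ^ p.2) •
    (mPoch A (p.1 + p.2) * mPoch B p.1 * mPoch B' p.2 * (mPoch C (p.1 + p.2))⁻¹)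

private lemma appellF1_eq_tsum (A B B' C : Matrix (Fin r) (Fin r) ℂ) (x y : ℂ) :
    appellF1 A B B' C x y = ∑' p, F1t A B B' C x y p := rfl

private lemma norm_one_le : ‖(1 : Matrix (Fin r) (Fin r) ℂ)‖ ≤ 1 := by
  rw [← Matrix.diagonal_one, Matrix.linfty_opNorm_diagonal]
  exact (pi_norm_le_iff_of_nonneg zero_le_one).mpr fun i => by simp

private lemma norm_mPoch_le (A : Matrix (Fin r) (Fin r) ℂ) (k : ℕ) :
    ‖mPoch A k‖ ≤ ∏ j ∈ Finset.range k, (‖A‖ + j) := by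
  induction k with
  | zero =>
      simp only [mPoch, Finset.prod_range_zero]
      exact norm_one_le
  | succ k ih =>
      rw [mPoch_succ, Finset.prod_range_succ]
      have h1 : ‖A + (k : ℂ) • (1 : Matrix (Fin r) (Fin r) ℂ)‖ ≤ ‖A‖ + k := by
        refine (norm_add_le _ _).trans ?_
        have h2 : ‖(k : ℂ) • (1 : Matrix (Fin r) (Fin r) ℂ)‖ ≤ k := by
          rw [norm_smul, Complex.norm_natCast]
          exact mul_le_of_le_one_right (Nat.cast_nonneg k) norm_one_le
        linarith
      exact (norm_mul_le _ _).trans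
        (mul_le_mul ih h1 (norm_nonneg _) (Finset.prod_nonneg fun j _ => by positivity))

private lemma norm_inv_mPoch_le (C : Matrix (Fin r) (Fin r) ℂ) (k : ℕ) :
    ‖(mPoch C k)⁻¹‖ ≤ ∏ j ∈ Finset.range k, ‖(C + (j : ℂ) • 1)⁻¹‖ := by
  induction k with
  | zero =>
      have : (mPoch C 0)⁻¹ = (1 : Matrix (Fin r) (Fin r) ℂ) := by
        show (1 : Matrix (Fin r) (Fin r) ℂ)⁻¹ = 1
        exact inv_one
      rw [this, Finset.prod_range_zero]
      exact norm_one_le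
  | succ k ih =>
      rw [mPoch_succ, Matrix.mul_inv_rev, Finset.prod_range_succ, mul_comm (∏ j ∈ Finset.range k, _)]
      exact (norm_mul_le _ _).trans
        (mul_le_mul_of_nonneg_left ih (norm_nonneg _))

private lemma norm_inv_shift_le {C : Matrix (Fin r) (Fin r) ℂ}
    (hC : ∀ n : ℕ, IsUnit (C + (n : ℂ) • (1 : Matrix (Fin r) (Fin r) ℂ))) {j : ℕ}
    (hj : ‖C‖ < (j : ℝ)) :
    ‖(C + (j : ℂ) • 1)⁻¹‖ ≤ ((j : ℝ) - ‖C‖)⁻¹ := by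
  set E := (C + (j : ℂ) • (1 : Matrix (Fin r) (Fin r) ℂ))⁻¹ with hE
  have hmul : (C + (j : ℂ) • 1) * E = 1 :=
    Matrix.mul_nonsing_inv _ ((Matrix.isUnit_iff_isUnit_det _).mp (hC j))
  have hkey : (j : ℂ) • E = 1 - C * E := by
    rw [add_mul, smul_mul_assoc, one_mul] at hmul
    exact eq_sub_of_add_eq' hmul
  have h1 : (j : ℝ) * ‖E‖ ≤ 1 + ‖C‖ * ‖E‖ := by
    have h2 : ‖(j : ℂ) • E‖ ≤ ‖(1 : Matrix (Fin r) (Fin r) ℂ)‖ + ‖C * E‖ := by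
      rw [hkey]; exact norm_sub_le _ _
    rw [norm_smul, Complex.norm_natCast] at h2
    have h3 := norm_mul_le C E
    have h4 : ‖(1 : Matrix (Fin r) (Fin r) ℂ)‖ ≤ 1 := norm_one_le
    linarith
  have hpos : (0 : ℝ) < (j : ℝ) - ‖C‖ := by linarith
  rw [inv_eq_one_div, le_div_iff₀ hpos]
  have h5 : (0 : ℝ) ≤ ‖E‖ := norm_nonneg _
  nlinarith

/-- key scalar ratio estimate -/
private lemma ratio_aux {a t c X ρ dk : ℝ} {N m k : ℕ} (ha : 0 ≤ a) (ht : 0 ≤ t)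
    (hc : 0 ≤ c) (hX : 0 ≤ X) (hd : 0 ≤ dk) (hdk : dk ≤ ((k : ℝ) - c)⁻¹)
    (hcN : c < (N : ℝ)) (hNm : N ≤ m) (hmk : m ≤ k)
    (hf : (1 + (a + c) / ((N : ℝ) - c)) * ((1 + t / ((N : ℝ) + 1)) * X) ≤ ρ) :
    (a + (k : ℝ)) * ((t + (m : ℝ)) * (dk * X)) ≤ ρ * ((m : ℝ) + 1) := by
  have hNk : (N : ℝ) ≤ (k : ℝ) := by exact_mod_cast hNm.trans hmk
  have hNm' : (N : ℝ) ≤ (m : ℝ) := by exact_mod_cast hNm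
  have hNc : (0 : ℝ) < (N : ℝ) - c := by linarith
  have hkc : (0 : ℝ) < (k : ℝ) - c := by linarith
  set q : ℝ := (a + c) / ((N : ℝ) - c) with hq
  have hq0 : 0 ≤ q := by positivity
  have hqN : q * ((N : ℝ) - c) = a + c := div_mul_cancel₀ _ (ne_of_gt hNc)
  set u : ℝ := t / ((N : ℝ) + 1) with hu
  have hu0 : 0 ≤ u := by positivity
  have huN : u * ((N : ℝ) + 1) = t := div_mul_cancel₀ _ (by positivity)
  -- (a + k) * dk ≤ 1 + q
  have e1 : (a + (k : ℝ)) * dk ≤ 1 + q := by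
    have e1a : (a + (k : ℝ)) * dk ≤ (a + (k : ℝ)) * ((k : ℝ) - c)⁻¹ :=
      mul_le_mul_of_nonneg_left hdk (by positivity)
    have e1b : (a + (k : ℝ)) * ((k : ℝ) - c)⁻¹ ≤ 1 + q := by
      rw [← div_eq_mul_inv, div_le_iff₀ hkc]
      nlinarith [mul_le_mul_of_nonneg_left (sub_le_sub_right hNk c) hq0]
    exact e1a.trans e1b
  -- t + m ≤ (1 + u) * (m + 1)
  have e2 : t + (m : ℝ) ≤ (1 + u) * ((m : ℝ) + 1) := by
    nlinarith [mul_le_mul_of_nonneg_left (show (N : ℝ) + 1 ≤ (m : ℝ) + 1 by linarith) hu0]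
  have hm1 : (0 : ℝ) ≤ (m : ℝ) + 1 := by positivity
  calc (a + (k : ℝ)) * ((t + (m : ℝ)) * (dk * X))
      = ((a + (k : ℝ)) * dk) * ((t + (m : ℝ)) * X) := by ring
    _ ≤ (1 + q) * (((1 + u) * ((m : ℝ) + 1)) * X) := by
        refine mul_le_mul e1 ?_ (by positivity) (by positivity)
        exact mul_le_mul_of_nonneg_right e2 hX
    _ = ((1 + q) * ((1 + u) * X)) * ((m : ℝ) + 1) := by ring
    _ ≤ ρ * ((m : ℝ) + 1) := mul_le_mul_of_nonneg_right hf hm1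

/-- Real upper bound for the norm of a term. -/
private noncomputable def Ub (A B B' C : Matrix (Fin r) (Fin r) ℂ) (x y : ℂ) (m n : ℕ) : ℝ :=
  ((m.factorial : ℝ) * (n.factorial : ℝ))⁻¹ * ‖x‖ ^ m * ‖y‖ ^ n *
    ((∏ j ∈ Finset.range (m + n), (‖A‖ + j)) * (∏ j ∈ Finset.range m, (‖B‖ + j)) *
      (∏ j ∈ Finset.range n, (‖B'‖ + j)) * ∏ j ∈ Finset.range (m + n), ‖(C + (j : ℂ) • 1)⁻¹‖)

private lemma Ub_nonneg (A B B' C : Matrix (Fin r) (Fin r) ℂ) (x y : ℂ) (m n : ℕ) :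
    0 ≤ Ub A B B' C x y m n := by
  unfold Ub
  have h1 : (0:ℝ) ≤ ∏ j ∈ Finset.range (m + n), (‖A‖ + j) :=
    Finset.prod_nonneg fun j _ => by positivity
  have h2 : (0:ℝ) ≤ ∏ j ∈ Finset.range m, (‖B‖ + j) :=
    Finset.prod_nonneg fun j _ => by positivity
  have h3 : (0:ℝ) ≤ ∏ j ∈ Finset.range n, (‖B'‖ + j) :=
    Finset.prod_nonneg fun j _ => by positivity
  have h4 : (0:ℝ) ≤ ∏ j ∈ Finset.range (m + n), ‖(C + (j : ℂ) • (1 : Matrix (Fin r) (Fin r) ℂ))⁻¹‖ :=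
    Finset.prod_nonneg fun j _ => norm_nonneg _
  positivity

private lemma norm_F1t_le (A B B' C : Matrix (Fin r) (Fin r) ℂ) (x y : ℂ) (p : ℕ × ℕ) :
    ‖F1t A B B' C x y p‖ ≤ Ub A B B' C x y p.1 p.2 := by
  obtain ⟨m, n⟩ := p
  rw [F1t, norm_smul]
  have hc : ‖(((m.factorial : ℂ) * (n.factorial : ℂ))⁻¹ * x ^ m * y ^ n)‖
      = ((m.factorial : ℝ) * (n.factorial : ℝ))⁻¹ * ‖x‖ ^ m * ‖y‖ ^ n := by
    simp [norm_mul, norm_inv, norm_pow, Complex.norm_natCast]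
  rw [hc]
  unfold Ub
  simp only [mul_assoc]
  refine mul_le_mul_of_nonneg_left ?_ (by positivity)
  refine mul_le_mul_of_nonneg_left ?_ (by positivity)
  refine mul_le_mul_of_nonneg_left ?_ (by positivity)
  simp only [← mul_assoc]
  calc ‖mPoch A (m + n) * mPoch B m * mPoch B' n * (mPoch C (m + n))⁻¹‖
      ≤ ‖mPoch A (m + n)‖ * ‖mPoch B m‖ * ‖mPoch B' n‖ * ‖(mPoch C (m + n))⁻¹‖ := by
        refine (norm_mul_le _ _).trans (mul_le_mul_of_nonneg_right ?_ (norm_nonneg _))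
        refine (norm_mul_le _ _).trans (mul_le_mul_of_nonneg_right ?_ (norm_nonneg _))
        exact norm_mul_le _ _
    _ ≤ (∏ j ∈ Finset.range (m + n), (‖A‖ + j)) * (∏ j ∈ Finset.range m, (‖B‖ + j)) *
        (∏ j ∈ Finset.range n, (‖B'‖ + j)) * ∏ j ∈ Finset.range (m + n), ‖(C + (j : ℂ) • 1)⁻¹‖ := by
        have pA := norm_mPoch_le A (m + n)
        have pB := norm_mPoch_le B m
        have pB' := norm_mPoch_le B' n
        have pC := norm_inv_mPoch_le C (m + n)
        have nA : (0:ℝ) ≤ ∏ j ∈ Finset.range (m + n), (‖A‖ + j) :=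
          Finset.prod_nonneg fun j _ => by positivity
        have nB : (0:ℝ) ≤ ∏ j ∈ Finset.range m, (‖B‖ + j) :=
          Finset.prod_nonneg fun j _ => by positivity
        have nB' : (0:ℝ) ≤ ∏ j ∈ Finset.range n, (‖B'‖ + j) :=
          Finset.prod_nonneg fun j _ => by positivity
        gcongr <;> first | exact norm_nonneg _ | assumption

private lemma Ub_succ_left (A B B' C : Matrix (Fin r) (Fin r) ℂ) (x y : ℂ) (m n : ℕ) :
    Ub A B B' C x y (m + 1) n * ((m : ℝ) + 1) =
      Ub A B B' C x y m n *
        ((‖A‖ + ((m + n : ℕ) : ℝ)) * ((‖B‖ + (m : ℝ)) *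
          (‖(C + ((m + n : ℕ) : ℂ) • (1 : Matrix (Fin r) (Fin r) ℂ))⁻¹‖ * ‖x‖))) := by
  have hidx : m + 1 + n = (m + n) + 1 := by omega
  have hfac : ((m + 1).factorial : ℝ) = ((m : ℝ) + 1) * (m.factorial : ℝ) := by
    rw [Nat.factorial_succ]; push_cast; ring
  have hm : ((m.factorial : ℝ)) ≠ 0 := Nat.cast_ne_zero.mpr (Nat.factorial_ne_zero m)
  have hn : ((n.factorial : ℝ)) ≠ 0 := Nat.cast_ne_zero.mpr (Nat.factorial_ne_zero n)
  have hm1 : ((m : ℝ) + 1) ≠ 0 := by positivity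
  unfold Ub
  rw [hidx, Finset.prod_range_succ, Finset.prod_range_succ, Finset.prod_range_succ, hfac, pow_succ]
  field_simp

private lemma Ub_succ_right (A B B' C : Matrix (Fin r) (Fin r) ℂ) (x y : ℂ) (m n : ℕ) :
    Ub A B B' C x y m (n + 1) * ((n : ℝ) + 1) =
      Ub A B B' C x y m n *
        ((‖A‖ + ((m + n : ℕ) : ℝ)) * ((‖B'‖ + (n : ℝ)) *
          (‖(C + ((m + n : ℕ) : ℂ) • (1 : Matrix (Fin r) (Fin r) ℂ))⁻¹‖ * ‖y‖))) := by
  have hidx : m + (n + 1) = (m + n) + 1 := by omega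
  have hfac : ((n + 1).factorial : ℝ) = ((n : ℝ) + 1) * (n.factorial : ℝ) := by
    rw [Nat.factorial_succ]; push_cast; ring
  have hm : ((m.factorial : ℝ)) ≠ 0 := Nat.cast_ne_zero.mpr (Nat.factorial_ne_zero m)
  have hn : ((n.factorial : ℝ)) ≠ 0 := Nat.cast_ne_zero.mpr (Nat.factorial_ne_zero n)
  have hn1 : ((n : ℝ) + 1) ≠ 0 := by positivity
  unfold Ub
  rw [hidx, Finset.prod_range_succ, Finset.prod_range_succ, Finset.prod_range_succ, hfac, pow_succ]
  field_simp

private lemma summable_F1t (A B B' C : Matrix (Fin r) (Fin r) ℂ) (x y : ℂ)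
    (hC : ∀ n : ℕ, IsUnit (C + (n : ℂ) • (1 : Matrix (Fin r) (Fin r) ℂ)))
    (hx : ‖x‖ < 1) (hy : ‖y‖ < 1) :
    Summable (F1t A B B' C x y) := by
  classical
  set a : ℝ := ‖A‖ with ha
  set b : ℝ := ‖B‖ with hb
  set b' : ℝ := ‖B'‖ with hb'
  set c : ℝ := ‖C‖ with hcdef
  set X : ℝ := ‖x‖ with hX
  set Y : ℝ := ‖y‖ with hY
  have hX0 : 0 ≤ X := norm_nonneg x
  have hY0 : 0 ≤ Y := norm_nonneg y
  set ρ : ℝ := (1 + max X Y) / 2 with hρ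
  have hmax1 : max X Y < 1 := max_lt hx hy
  have hmax0 : 0 ≤ max X Y := le_max_of_le_left hX0
  have hρ1 : ρ < 1 := by rw [hρ]; linarith
  have hρ0 : 0 < ρ := by rw [hρ]; linarith
  have hXρ : X < ρ := by
    have : X ≤ max X Y := le_max_left X Y
    rw [hρ]; linarith
  have hYρ : Y < ρ := by
    have : Y ≤ max X Y := le_max_right X Y
    rw [hρ]; linarith
  -- choose N
  obtain ⟨N, hcN, hfX, hfY⟩ : ∃ N : ℕ, c < (N : ℝ) ∧
      (1 + (a + c) / ((N : ℝ) - c)) * ((1 + b / ((N : ℝ) + 1)) * X) ≤ ρ ∧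
      (1 + (a + c) / ((N : ℝ) - c)) * ((1 + b' / ((N : ℝ) + 1)) * Y) ≤ ρ := by
    have h1 : Tendsto (fun N : ℕ => (N : ℝ) - c) atTop atTop :=
      tendsto_atTop_add_const_right atTop (-c) tendsto_natCast_atTop_atTop
    have h2 : Tendsto (fun N : ℕ => (a + c) / ((N : ℝ) - c)) atTop (nhds 0) :=
      Filter.Tendsto.div_atTop tendsto_const_nhds h1
    have h3 : Tendsto (fun N : ℕ => (N : ℝ) + 1) atTop atTop :=
      tendsto_atTop_add_const_right atTop 1 tendsto_natCast_atTop_atTop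
    have h4 : Tendsto (fun N : ℕ => b / ((N : ℝ) + 1)) atTop (nhds 0) :=
      Filter.Tendsto.div_atTop tendsto_const_nhds h3
    have h4' : Tendsto (fun N : ℕ => b' / ((N : ℝ) + 1)) atTop (nhds 0) :=
      Filter.Tendsto.div_atTop tendsto_const_nhds h3
    have h5 : Tendsto (fun N : ℕ =>
        (1 + (a + c) / ((N : ℝ) - c)) * ((1 + b / ((N : ℝ) + 1)) * X)) atTop
        (nhds ((1 + 0) * ((1 + 0) * X))) :=
      ((tendsto_const_nhds.add h2).mul ((tendsto_const_nhds.add h4).mul tendsto_const_nhds))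
    have h6 : Tendsto (fun N : ℕ =>
        (1 + (a + c) / ((N : ℝ) - c)) * ((1 + b' / ((N : ℝ) + 1)) * Y)) atTop
        (nhds ((1 + 0) * ((1 + 0) * Y))) :=
      ((tendsto_const_nhds.add h2).mul ((tendsto_const_nhds.add h4').mul tendsto_const_nhds))
    simp only [add_zero, one_mul] at h5 h6
    have e5 := h5.eventually_lt_const hXρ
    have e6 := h6.eventually_lt_const hYρ
    have e7 : ∀ᶠ N : ℕ in atTop, c < (N : ℝ) :=
      tendsto_natCast_atTop_atTop.eventually_gt_atTop c
    obtain ⟨N, hN⟩ := ((e7.and e5).and e6).exists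
    exact ⟨N, hN.1.1, hN.1.2.le, hN.2.le⟩
  -- step inequalities
  have stepm : ∀ m n : ℕ, N ≤ m →
      Ub A B B' C x y (m + 1) n ≤ ρ * Ub A B B' C x y m n := by
    intro m n hm
    have hrec := Ub_succ_left A B B' C x y m n
    have hck : c < ((m + n : ℕ) : ℝ) := by
      have : (N : ℝ) ≤ ((m + n : ℕ) : ℝ) := by exact_mod_cast hm.trans (Nat.le_add_right m n)
      linarith
    have hratio := ratio_aux (N := N) (m := m) (k := m + n)
      (norm_nonneg A) (norm_nonneg B) (norm_nonneg C) hX0 (norm_nonneg _)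
      (norm_inv_shift_le hC hck) hcN hm (Nat.le_add_right m n) hfX
    have hUnn := Ub_nonneg A B B' C x y m n
    have hfin : Ub A B B' C x y (m + 1) n * ((m : ℝ) + 1) ≤
        (ρ * Ub A B B' C x y m n) * ((m : ℝ) + 1) := by
      rw [hrec]
      calc Ub A B B' C x y m n * _ ≤ Ub A B B' C x y m n * (ρ * ((m : ℝ) + 1)) :=
            mul_le_mul_of_nonneg_left hratio hUnn
        _ = (ρ * Ub A B B' C x y m n) * ((m : ℝ) + 1) := by ring
    exact le_of_mul_le_mul_right hfin (by positivity)
  have stepn : ∀ m n : ℕ, N ≤ n →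
      Ub A B B' C x y m (n + 1) ≤ ρ * Ub A B B' C x y m n := by
    intro m n hn
    have hrec := Ub_succ_right A B B' C x y m n
    have hck : c < ((m + n : ℕ) : ℝ) := by
      have : (N : ℝ) ≤ ((m + n : ℕ) : ℝ) := by exact_mod_cast hn.trans (Nat.le_add_left n m)
      linarith
    have hratio := ratio_aux (N := N) (m := n) (k := m + n)
      (norm_nonneg A) (norm_nonneg B') (norm_nonneg C) hY0 (norm_nonneg _)
      (norm_inv_shift_le hC hck) hcN hn (Nat.le_add_left n m) hfY
    have hUnn := Ub_nonneg A B B' C x y m n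
    have hfin : Ub A B B' C x y m (n + 1) * ((n : ℝ) + 1) ≤
        (ρ * Ub A B B' C x y m n) * ((n : ℝ) + 1) := by
      rw [hrec]
      calc Ub A B B' C x y m n * _ ≤ Ub A B B' C x y m n * (ρ * ((n : ℝ) + 1)) :=
            mul_le_mul_of_nonneg_left hratio hUnn
        _ = (ρ * Ub A B B' C x y m n) * ((n : ℝ) + 1) := by ring
    exact le_of_mul_le_mul_right hfin (by positivity)
  -- descent
  have descm : ∀ n m : ℕ, Ub A B B' C x y m n ≤ ρ ^ (m - N) * Ub A B B' C x y (min m N) n := by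
    intro n m
    induction m with
    | zero => simp
    | succ m ih =>
        by_cases hm : N ≤ m
        · have hmin1 : min (m + 1) N = N := min_eq_right (hm.trans (Nat.le_succ m))
          have hmin2 : min m N = N := min_eq_right hm
          rw [hmin1, Nat.succ_sub hm, pow_succ]
          rw [hmin2] at ih
          calc Ub A B B' C x y (m + 1) n ≤ ρ * Ub A B B' C x y m n := stepm m n hm
            _ ≤ ρ * (ρ ^ (m - N) * Ub A B B' C x y N n) :=
                mul_le_mul_of_nonneg_left ih hρ0.le
            _ = ρ ^ (m - N) * ρ * Ub A B B' C x y N n := by ring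
        · push_neg at hm
          have h1 : m + 1 - N = 0 := by omega
          have h2 : min (m + 1) N = m + 1 := min_eq_left (by omega)
          rw [h1, h2, pow_zero, one_mul]
  have descn : ∀ m n : ℕ, Ub A B B' C x y m n ≤ ρ ^ (n - N) * Ub A B B' C x y m (min n N) := by
    intro m n
    induction n with
    | zero => simp
    | succ n ih =>
        by_cases hn : N ≤ n
        · have hmin1 : min (n + 1) N = N := min_eq_right (hn.trans (Nat.le_succ n))
          have hmin2 : min n N = N := min_eq_right hn
          rw [hmin1, Nat.succ_sub hn, pow_succ]
          rw [hmin2] at ih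
          calc Ub A B B' C x y m (n + 1) ≤ ρ * Ub A B B' C x y m n := stepn m n hn
            _ ≤ ρ * (ρ ^ (n - N) * Ub A B B' C x y m N) :=
                mul_le_mul_of_nonneg_left ih hρ0.le
            _ = ρ ^ (n - N) * ρ * Ub A B B' C x y m N := by ring
        · push_neg at hn
          have h1 : n + 1 - N = 0 := by omega
          have h2 : min (n + 1) N = n + 1 := min_eq_left (by omega)
          rw [h1, h2, pow_zero, one_mul]
  -- finite bound
  set S : ℝ := ∑ q ∈ Finset.range (N + 1) ×ˢ Finset.range (N + 1), Ub A B B' C x y q.1 q.2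
    with hS
  have hSb : ∀ i j : ℕ, i ≤ N → j ≤ N → Ub A B B' C x y i j ≤ S := by
    intro i j hi hj
    exact Finset.single_le_sum (f := fun q : ℕ × ℕ => Ub A B B' C x y q.1 q.2) (a := (i, j))
      (fun q _ => Ub_nonneg A B B' C x y q.1 q.2)
      (Finset.mem_product.mpr ⟨Finset.mem_range.mpr (by omega), Finset.mem_range.mpr (by omega)⟩)
  have hS0 : 0 ≤ S := Finset.sum_nonneg fun q _ => Ub_nonneg A B B' C x y q.1 q.2
  -- combine
  have key : ∀ p : ℕ × ℕ, ‖F1t A B B' C x y p‖ ≤ (S / (ρ ^ N * ρ ^ N)) * (ρ ^ p.1 * ρ ^ p.2) := by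
    rintro ⟨m, n⟩
    have k1 : Ub A B B' C x y m n ≤ ρ ^ (m - N) * (ρ ^ (n - N) * S) := by
      calc Ub A B B' C x y m n ≤ ρ ^ (m - N) * Ub A B B' C x y (min m N) n := descm n m
        _ ≤ ρ ^ (m - N) * (ρ ^ (n - N) * Ub A B B' C x y (min m N) (min n N)) :=
            mul_le_mul_of_nonneg_left (descn (min m N) n) (by positivity)
        _ ≤ ρ ^ (m - N) * (ρ ^ (n - N) * S) := by
            refine mul_le_mul_of_nonneg_left (mul_le_mul_of_nonneg_left ?_ (by positivity))
              (by positivity)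
            exact hSb _ _ (min_le_right m N) (min_le_right n N)
    have e1 : ρ ^ (m - N) * ρ ^ N ≤ ρ ^ m := by
      rw [← pow_add]
      exact pow_le_pow_of_le_one hρ0.le hρ1.le le_tsub_add
    have e2 : ρ ^ (n - N) * ρ ^ N ≤ ρ ^ n := by
      rw [← pow_add]
      exact pow_le_pow_of_le_one hρ0.le hρ1.le le_tsub_add
    have hρN : (0 : ℝ) < ρ ^ N := pow_pos hρ0 N
    have k2 : Ub A B B' C x y m n * (ρ ^ N * ρ ^ N) ≤ S * (ρ ^ m * ρ ^ n) := by
      calc Ub A B B' C x y m n * (ρ ^ N * ρ ^ N)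
          ≤ (ρ ^ (m - N) * (ρ ^ (n - N) * S)) * (ρ ^ N * ρ ^ N) :=
            mul_le_mul_of_nonneg_right k1 (by positivity)
        _ = S * ((ρ ^ (m - N) * ρ ^ N) * (ρ ^ (n - N) * ρ ^ N)) := by ring
        _ ≤ S * (ρ ^ m * ρ ^ n) := by
            refine mul_le_mul_of_nonneg_left ?_ hS0
            exact mul_le_mul e1 e2 (by positivity) (by positivity)
    have k3 : Ub A B B' C x y m n ≤ (S / (ρ ^ N * ρ ^ N)) * (ρ ^ m * ρ ^ n) := by
      rw [div_mul_eq_mul_div, le_div_iff₀ (by positivity)]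
      calc Ub A B B' C x y m n * (ρ ^ N * ρ ^ N) ≤ S * (ρ ^ m * ρ ^ n) := k2
        _ = S * (ρ ^ m * ρ ^ n) := rfl
    exact (norm_F1t_le A B B' C x y (m, n)).trans k3
  have hgeo : Summable (fun p : ℕ × ℕ => (S / (ρ ^ N * ρ ^ N)) * (ρ ^ p.1 * ρ ^ p.2)) := by
    refine Summable.mul_left _ ?_
    exact (summable_geometric_of_lt_one hρ0.le hρ1).mul_of_nonneg
      (summable_geometric_of_lt_one hρ0.le hρ1)
      (fun i => by positivity) (fun i => by positivity)
  exact Summable.of_norm_bounded hgeo key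

/-! ### Index shifting -/

private noncomputable def shiftL (g : ℕ × ℕ → Matrix (Fin r) (Fin r) ℂ) :
    ℕ × ℕ → Matrix (Fin r) (Fin r) ℂ
  | (0, _) => 0
  | (m + 1, n) => g (m, n)

private noncomputable def shiftR (g : ℕ × ℕ → Matrix (Fin r) (Fin r) ℂ) :
    ℕ × ℕ → Matrix (Fin r) (Fin r) ℂ
  | (_, 0) => 0
  | (m, n + 1) => g (m, n)

private lemma injL : Function.Injective (fun q : ℕ × ℕ => (q.1 + 1, q.2)) := by
  rintro ⟨a, b⟩ ⟨c, d⟩ h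
  simp only [Prod.mk.injEq] at h ⊢
  exact ⟨by omega, h.2⟩

private lemma injR : Function.Injective (fun q : ℕ × ℕ => (q.1, q.2 + 1)) := by
  rintro ⟨a, b⟩ ⟨c, d⟩ h
  simp only [Prod.mk.injEq] at h ⊢
  exact ⟨h.1, by omega⟩

private lemma shiftL_eq_zero (g : ℕ × ℕ → Matrix (Fin r) (Fin r) ℂ) :
    ∀ p ∉ Set.range (fun q : ℕ × ℕ => (q.1 + 1, q.2)), shiftL (r := r) g p = 0 := by
  rintro ⟨m, n⟩ hp
  match m with
  | 0 => rfl
  | m + 1 => exact absurd ⟨(m, n), rfl⟩ hp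

private lemma shiftR_eq_zero (g : ℕ × ℕ → Matrix (Fin r) (Fin r) ℂ) :
    ∀ p ∉ Set.range (fun q : ℕ × ℕ => (q.1, q.2 + 1)), shiftR (r := r) g p = 0 := by
  rintro ⟨m, n⟩ hp
  match n with
  | 0 => rfl
  | n + 1 => exact absurd ⟨(m, n), rfl⟩ hp

private lemma shiftL_support (g : ℕ × ℕ → Matrix (Fin r) (Fin r) ℂ) :
    Function.support (shiftL (r := r) g) ⊆ Set.range (fun q : ℕ × ℕ => (q.1 + 1, q.2)) := by
  intro p hp
  by_contra hcon
  exact hp (shiftL_eq_zero g p hcon)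

private lemma shiftR_support (g : ℕ × ℕ → Matrix (Fin r) (Fin r) ℂ) :
    Function.support (shiftR (r := r) g) ⊆ Set.range (fun q : ℕ × ℕ => (q.1, q.2 + 1)) := by
  intro p hp
  by_contra hcon
  exact hp (shiftR_eq_zero g p hcon)

private lemma tsum_shiftL (g : ℕ × ℕ → Matrix (Fin r) (Fin r) ℂ) :
    ∑' p, shiftL (r := r) g p = ∑' q, g q := by
  rw [← injL.tsum_eq (shiftL_support g)]
  exact tsum_congr fun ⟨a, b⟩ => rfl

private lemma tsum_shiftR (g : ℕ × ℕ → Matrix (Fin r) (Fin r) ℂ) :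
    ∑' p, shiftR (r := r) g p = ∑' q, g q := by
  rw [← injR.tsum_eq (shiftR_support g)]
  exact tsum_congr fun ⟨a, b⟩ => rfl

private lemma summable_shiftL {g : ℕ × ℕ → Matrix (Fin r) (Fin r) ℂ} (hg : Summable g) :
    Summable (shiftL (r := r) g) := by
  refine (injL.summable_iff (shiftL_eq_zero g)).mp ?_
  convert hg using 1
  exact funext fun ⟨a, b⟩ => rfl

private lemma summable_shiftR {g : ℕ × ℕ → Matrix (Fin r) (Fin r) ℂ} (hg : Summable g) :
    Summable (shiftR (r := r) g) := by
  refine (injR.summable_iff (shiftR_eq_zero g)).mp ?_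
  convert hg using 1
  exact funext fun ⟨a, b⟩ => rfl

/-! ### One-step contiguous relations -/

private lemma step_left (A B B' C : Matrix (Fin r) (Fin r) ℂ) (x y : ℂ)
    (hC : ∀ n : ℕ, IsUnit (C + (n : ℂ) • (1 : Matrix (Fin r) (Fin r) ℂ)))
    (hx : ‖x‖ < 1) (hy : ‖y‖ < 1) :
    appellF1 A (B + 1) B' C x y =
      appellF1 A B B' C x y + x • (A * appellF1 (A + 1) (B + 1) B' (C + 1) x y * C⁻¹) := by
  have hC1 := hC_succ hC
  have S1 := summable_F1t A B B' C x y hC hx hy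
  have S2 := summable_F1t (A + 1) (B + 1) B' (C + 1) x y hC1 hx hy
  have Sg : Summable (fun q => x • (A * F1t (A + 1) (B + 1) B' (C + 1) x y q * C⁻¹)) :=
    ((S2.mul_left A).mul_right C⁻¹).const_smul x
  have hpt : ∀ p : ℕ × ℕ, F1t A (B + 1) B' C x y p = F1t A B B' C x y p +
      shiftL (fun q => x • (A * F1t (A + 1) (B + 1) B' (C + 1) x y q * C⁻¹)) p := by
    rintro ⟨m, n⟩
    match m with
    | 0 =>
        show F1t A (B + 1) B' C x y (0, n) = F1t A B B' C x y (0, n) + 0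
        rw [add_zero]
        simp only [F1t, mPoch]
    | m + 1 =>
        show F1t A (B + 1) B' C x y (m + 1, n) = F1t A B B' C x y (m + 1, n) +
          x • (A * F1t (A + 1) (B + 1) B' (C + 1) x y (m, n) * C⁻¹)
        have key : mPoch A (m + 1 + n) * mPoch (B + 1) (m + 1) * mPoch B' n *
            (mPoch C (m + 1 + n))⁻¹
            = mPoch A (m + 1 + n) * mPoch B (m + 1) * mPoch B' n * (mPoch C (m + 1 + n))⁻¹
              + ((m : ℂ) + 1) • (A * (mPoch (A + 1) (m + n) * mPoch (B + 1) m * mPoch B' n *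
                (mPoch (C + 1) (m + n))⁻¹) * C⁻¹) := by
          have hidx : m + 1 + n = (m + n) + 1 := by omega
          rw [hidx, mPoch_shift B m, mPoch_succ_left A, mPoch_succ_left C, Matrix.mul_inv_rev]
          simp only [mul_add, add_mul, smul_mul_assoc, mul_smul_comm, mul_assoc]
        have hsc : (((m + 1).factorial : ℂ) * (n.factorial : ℂ))⁻¹ * x ^ (m + 1) * y ^ n *
            ((m : ℂ) + 1)
            = x * (((m.factorial : ℂ) * (n.factorial : ℂ))⁻¹ * x ^ m * y ^ n) := by
          have h1 : ((m + 1).factorial : ℂ) = ((m : ℂ) + 1) * (m.factorial : ℂ) := by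
            rw [Nat.factorial_succ]; push_cast; ring
          have h2 : ((m.factorial : ℂ)) ≠ 0 := Nat.cast_ne_zero.mpr (Nat.factorial_ne_zero m)
          have h3 : ((n.factorial : ℂ)) ≠ 0 := Nat.cast_ne_zero.mpr (Nat.factorial_ne_zero n)
          have h4 : ((m : ℂ) + 1) ≠ 0 := Nat.cast_add_one_ne_zero m
          rw [h1, pow_succ]
          field_simp
        show ((((m + 1).factorial : ℂ) * (n.factorial : ℂ))⁻¹ * x ^ (m + 1) * y ^ n) •
            (mPoch A (m + 1 + n) * mPoch (B + 1) (m + 1) * mPoch B' n *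
              (mPoch C (m + 1 + n))⁻¹) = _
        rw [key, smul_add]
        congr 1
        simp only [F1t]
        rw [smul_smul, mul_smul_comm, smul_mul_assoc, smul_smul, hsc]
  have Sh : Summable (shiftL (fun q => x • (A * F1t (A + 1) (B + 1) B' (C + 1) x y q * C⁻¹))) :=
    summable_shiftL Sg
  have t1 : ∑' q, (A * F1t (A + 1) (B + 1) B' (C + 1) x y q * C⁻¹)
      = A * (∑' q, F1t (A + 1) (B + 1) B' (C + 1) x y q) * C⁻¹ := by
    rw [Summable.tsum_mul_right _ (S2.mul_left A), Summable.tsum_mul_left _ S2]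
  calc appellF1 A (B + 1) B' C x y
      = ∑' p, (F1t A B B' C x y p +
          shiftL (fun q => x • (A * F1t (A + 1) (B + 1) B' (C + 1) x y q * C⁻¹)) p) := by
        rw [appellF1_eq_tsum]; exact tsum_congr hpt
    _ = (∑' p, F1t A B B' C x y p) +
        ∑' p, shiftL (fun q => x • (A * F1t (A + 1) (B + 1) B' (C + 1) x y q * C⁻¹)) p :=
        Summable.tsum_add S1 Sh
    _ = appellF1 A B B' C x y + x • (A * appellF1 (A + 1) (B + 1) B' (C + 1) x y * C⁻¹) := by
        rw [← appellF1_eq_tsum, tsum_shiftL,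
          Summable.tsum_const_smul x ((S2.mul_left A).mul_right C⁻¹), t1, ← appellF1_eq_tsum]

private lemma step_right (A B B' C : Matrix (Fin r) (Fin r) ℂ) (x y : ℂ)
    (hC : ∀ n : ℕ, IsUnit (C + (n : ℂ) • (1 : Matrix (Fin r) (Fin r) ℂ)))
    (hx : ‖x‖ < 1) (hy : ‖y‖ < 1) :
    appellF1 A B (B' + 1) C x y =
      appellF1 A B B' C x y + y • (A * appellF1 (A + 1) B (B' + 1) (C + 1) x y * C⁻¹) := by
  have hC1 := hC_succ hC
  have S1 := summable_F1t A B B' C x y hC hx hy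
  have S2 := summable_F1t (A + 1) B (B' + 1) (C + 1) x y hC1 hx hy
  have Sg : Summable (fun q => y • (A * F1t (A + 1) B (B' + 1) (C + 1) x y q * C⁻¹)) :=
    ((S2.mul_left A).mul_right C⁻¹).const_smul y
  have hpt : ∀ p : ℕ × ℕ, F1t A B (B' + 1) C x y p = F1t A B B' C x y p +
      shiftR (fun q => y • (A * F1t (A + 1) B (B' + 1) (C + 1) x y q * C⁻¹)) p := by
    rintro ⟨m, n⟩
    match n with
    | 0 =>
        show F1t A B (B' + 1) C x y (m, 0) = F1t A B B' C x y (m, 0) + 0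
        rw [add_zero]
        simp only [F1t, mPoch]
    | n + 1 =>
        show F1t A B (B' + 1) C x y (m, n + 1) = F1t A B B' C x y (m, n + 1) +
          y • (A * F1t (A + 1) B (B' + 1) (C + 1) x y (m, n) * C⁻¹)
        have key : mPoch A (m + (n + 1)) * mPoch B m * mPoch (B' + 1) (n + 1) *
            (mPoch C (m + (n + 1)))⁻¹
            = mPoch A (m + (n + 1)) * mPoch B m * mPoch B' (n + 1) * (mPoch C (m + (n + 1)))⁻¹
              + ((n : ℂ) + 1) • (A * (mPoch (A + 1) (m + n) * mPoch B m * mPoch (B' + 1) n *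
                (mPoch (C + 1) (m + n))⁻¹) * C⁻¹) := by
          have hidx : m + (n + 1) = (m + n) + 1 := by omega
          rw [hidx, mPoch_shift B' n, mPoch_succ_left A, mPoch_succ_left C, Matrix.mul_inv_rev]
          simp only [mul_add, add_mul, smul_mul_assoc, mul_smul_comm, mul_assoc]
        have hsc : ((m.factorial : ℂ) * ((n + 1).factorial : ℂ))⁻¹ * x ^ m * y ^ (n + 1) *
            ((n : ℂ) + 1)
            = y * (((m.factorial : ℂ) * (n.factorial : ℂ))⁻¹ * x ^ m * y ^ n) := by
          have h1 : ((n + 1).factorial : ℂ) = ((n : ℂ) + 1) * (n.factorial : ℂ) := by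
            rw [Nat.factorial_succ]; push_cast; ring
          have h2 : ((m.factorial : ℂ)) ≠ 0 := Nat.cast_ne_zero.mpr (Nat.factorial_ne_zero m)
          have h3 : ((n.factorial : ℂ)) ≠ 0 := Nat.cast_ne_zero.mpr (Nat.factorial_ne_zero n)
          have h4 : ((n : ℂ) + 1) ≠ 0 := Nat.cast_add_one_ne_zero n
          rw [h1, pow_succ]
          field_simp
        show (((m.factorial : ℂ) * ((n + 1).factorial : ℂ))⁻¹ * x ^ m * y ^ (n + 1)) •
            (mPoch A (m + (n + 1)) * mPoch B m * mPoch (B' + 1) (n + 1) *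
              (mPoch C (m + (n + 1)))⁻¹) = _
        rw [key, smul_add]
        congr 1
        simp only [F1t]
        rw [smul_smul, mul_smul_comm, smul_mul_assoc, smul_smul, hsc]
  have Sh : Summable (shiftR (fun q => y • (A * F1t (A + 1) B (B' + 1) (C + 1) x y q * C⁻¹))) :=
    summable_shiftR Sg
  have t1 : ∑' q, (A * F1t (A + 1) B (B' + 1) (C + 1) x y q * C⁻¹)
      = A * (∑' q, F1t (A + 1) B (B' + 1) (C + 1) x y q) * C⁻¹ := by
    rw [Summable.tsum_mul_right _ (S2.mul_left A), Summable.tsum_mul_left _ S2]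
  calc appellF1 A B (B' + 1) C x y
      = ∑' p, (F1t A B B' C x y p +
          shiftR (fun q => y • (A * F1t (A + 1) B (B' + 1) (C + 1) x y q * C⁻¹)) p) := by
        rw [appellF1_eq_tsum]; exact tsum_congr hpt
    _ = (∑' p, F1t A B B' C x y p) +
        ∑' p, shiftR (fun q => y • (A * F1t (A + 1) B (B' + 1) (C + 1) x y q * C⁻¹)) p :=
        Summable.tsum_add S1 Sh
    _ = appellF1 A B B' C x y + y • (A * appellF1 (A + 1) B (B' + 1) (C + 1) x y * C⁻¹) := by
        rw [← appellF1_eq_tsum, tsum_shiftR,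
          Summable.tsum_const_smul y ((S2.mul_left A).mul_right C⁻¹), t1, ← appellF1_eq_tsum]

end AppellAux

theorem appellF1_recursion_B {r : ℕ} (A B B' C : Matrix (Fin r) (Fin r) ℂ) (x y : ℂ) (s : ℕ)
    (hC : ∀ n : ℕ, IsUnit (C + (n : ℂ) • (1 : Matrix (Fin r) (Fin r) ℂ)))
    (hx : ‖x‖ < 1) (hy : ‖y‖ < 1) :
    ((∀ k : ℕ, IsUnit (B + (k : ℂ) • (1 : Matrix (Fin r) (Fin r) ℂ))) →
      appellF1 A (B + (s : ℂ) • 1) B' C x y =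
        appellF1 A B B' C x y +
          x • (A * (∑ k ∈ Finset.Icc 1 s,
            appellF1 (A + 1) (B + (k : ℂ) • 1) B' (C + 1) x y) * C⁻¹)) ∧
    ((∀ k : ℕ, IsUnit (B' + (k : ℂ) • (1 : Matrix (Fin r) (Fin r) ℂ))) →
      appellF1 A B (B' + (s : ℂ) • 1) C x y =
        appellF1 A B B' C x y +
          y • (A * (∑ k ∈ Finset.Icc 1 s,
            appellF1 (A + 1) B (B' + (k : ℂ) • 1) (C + 1) x y) * C⁻¹)) ∧
    ((∀ k : ℕ, 1 ≤ k → k ≤ s → IsUnit (B - (k : ℂ) • (1 : Matrix (Fin r) (Fin r) ℂ))) →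
      appellF1 A (B - (s : ℂ) • 1) B' C x y =
        appellF1 A B B' C x y -
          x • (A * (∑ k ∈ Finset.range s,
            appellF1 (A + 1) (B - (k : ℂ) • 1) B' (C + 1) x y) * C⁻¹)) ∧
    ((∀ k : ℕ, 1 ≤ k → k ≤ s → IsUnit (B' - (k : ℂ) • (1 : Matrix (Fin r) (Fin r) ℂ))) →
      appellF1 A B (B' - (s : ℂ) • 1) C x y =
        appellF1 A B B' C x y -
          y • (A * (∑ k ∈ Finset.range s,
            appellF1 (A + 1) B (B' - (k : ℂ) • 1) (C + 1) x y) * C⁻¹)) := by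
  have main1 : ∀ t : ℕ, appellF1 A (B + (t : ℂ) • 1) B' C x y =
      appellF1 A B B' C x y + x • (A * (∑ k ∈ Finset.Icc 1 t,
        appellF1 (A + 1) (B + (k : ℂ) • 1) B' (C + 1) x y) * C⁻¹) := by
    intro t
    induction t with
    | zero => simp [Finset.Icc_eq_empty_of_lt (by norm_num : (0 : ℕ) < 1)]
    | succ t ih =>
        have hcast : B + ((t + 1 : ℕ) : ℂ) • 1 = (B + (t : ℂ) • 1) + 1 := by
          push_cast; rw [add_smul, one_smul]; abel
        rw [hcast, step_left A (B + (t : ℂ) • 1) B' C x y hC hx hy, ih,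
          Finset.sum_Icc_succ_top (Nat.le_add_left 1 t), ← hcast,
          mul_add, add_mul, smul_add, add_assoc]
  have main2 : ∀ t : ℕ, appellF1 A B (B' + (t : ℂ) • 1) C x y =
      appellF1 A B B' C x y + y • (A * (∑ k ∈ Finset.Icc 1 t,
        appellF1 (A + 1) B (B' + (k : ℂ) • 1) (C + 1) x y) * C⁻¹) := by
    intro t
    induction t with
    | zero => simp [Finset.Icc_eq_empty_of_lt (by norm_num : (0 : ℕ) < 1)]
    | succ t ih =>
        have hcast : B' + ((t + 1 : ℕ) : ℂ) • 1 = (B' + (t : ℂ) • 1) + 1 := by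
          push_cast; rw [add_smul, one_smul]; abel
        rw [hcast, step_right A B (B' + (t : ℂ) • 1) C x y hC hx hy, ih,
          Finset.sum_Icc_succ_top (Nat.le_add_left 1 t), ← hcast,
          mul_add, add_mul, smul_add, add_assoc]
  have main3 : ∀ t : ℕ, appellF1 A (B - (t : ℂ) • 1) B' C x y =
      appellF1 A B B' C x y - x • (A * (∑ k ∈ Finset.range t,
        appellF1 (A + 1) (B - (k : ℂ) • 1) B' (C + 1) x y) * C⁻¹) := by
    intro t
    induction t with
    | zero => simp
    | succ t ih =>
        have hcast : (B - ((t + 1 : ℕ) : ℂ) • 1) + 1 = B - (t : ℂ) • 1 := by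
          push_cast; rw [add_smul, one_smul]; abel
        have hstep := step_left A (B - ((t + 1 : ℕ) : ℂ) • 1) B' C x y hC hx hy
        rw [hcast] at hstep
        have h2 : appellF1 A (B - ((t + 1 : ℕ) : ℂ) • 1) B' C x y
            = appellF1 A (B - (t : ℂ) • 1) B' C x y
              - x • (A * appellF1 (A + 1) (B - (t : ℂ) • 1) B' (C + 1) x y * C⁻¹) :=
          eq_sub_of_add_eq hstep.symm
        rw [show ((t + 1 : ℕ) : ℂ) = ((t : ℕ) + 1 : ℕ) from rfl] at h2 ⊢
        rw [h2, ih, Finset.sum_range_succ, mul_add, add_mul, smul_add, sub_sub]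
  have main4 : ∀ t : ℕ, appellF1 A B (B' - (t : ℂ) • 1) C x y =
      appellF1 A B B' C x y - y • (A * (∑ k ∈ Finset.range t,
        appellF1 (A + 1) B (B' - (k : ℂ) • 1) (C + 1) x y) * C⁻¹) := by
    intro t
    induction t with
    | zero => simp
    | succ t ih =>
        have hcast : (B' - ((t + 1 : ℕ) : ℂ) • 1) + 1 = B' - (t : ℂ) • 1 := by
          push_cast; rw [add_smul, one_smul]; abel
        have hstep := step_right A B (B' - ((t + 1 : ℕ) : ℂ) • 1) C x y hC hx hy
        rw [hcast] at hstep
        have h2 : appellF1 A B (B' - ((t + 1 : ℕ) : ℂ) • 1) C x y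
            = appellF1 A B (B' - (t : ℂ) • 1) C x y
              - y • (A * appellF1 (A + 1) B (B' - (t : ℂ) • 1) (C + 1) x y * C⁻¹) :=
          eq_sub_of_add_eq hstep.symm
        rw [h2, ih, Finset.sum_range_succ, mul_add, add_mul, smul_add, sub_sub]
  exact ⟨fun _ => main1 s, fun _ => main2 s, fun _ => main3 s, fun _ => main4 s⟩
end
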